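/- arXiv:1909.11437 — 2 statements merged into one kernel-verified Lean document; each statement's English description precedes it below -/
import Mathlib

section
/- Let p be a prime, let k be a field of characteristic p, and let R = k[X]/(X^p − 1). Then the first André–Quillen homology H¹Cotangent of R over k (the first homology of the cotangent complex of R over k) is a free R-module of rank 1. (This computes the degree −1 part of the co-Lie complex of μ_p in characteristic p, showing coLie(μ_p) ≅ O ⊕ O[1] as an object of D(k).) -/
open Polynomial

set_option maxHeartbeats 1000000
set_option synthInstance.maxHeartbeats 400000

namespace H1MuP

variable (p : ℕ) (k : Type*) [Field k]

noncomputable abbrev Rq : Type _ := k[X] ⧸ Ideal.span {(X : k[X]) ^ p - 1}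

lemma comp_eq :
    (MvPolynomial.aeval (R := k) (fun _ : Unit => Ideal.Quotient.mk (Ideal.span {(X : k[X]) ^ p - 1}) X)).comp
      (MvPolynomial.pUnitAlgEquiv k).symm.toAlgHom
    = Ideal.Quotient.mkₐ k (Ideal.span {(X : k[X]) ^ p - 1}) := by
  ext1
  simp

lemma aeval_symm (q : k[X]) :
    (MvPolynomial.aeval (R := k) (fun _ : Unit => Ideal.Quotient.mk (Ideal.span {(X : k[X]) ^ p - 1}) X))
      ((MvPolynomial.pUnitAlgEquiv k).symm q) = Ideal.Quotient.mk _ q := by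
  have := DFunLike.congr_fun (comp_eq p k) q
  simp only [AlgHom.coe_comp, Function.comp_apply, AlgEquiv.toAlgHom_eq_coe,
    AlgEquiv.coe_algHom, Ideal.Quotient.mkₐ_eq_mk] at this
  exact this

lemma surj : Function.Surjective
    (MvPolynomial.aeval (R := k) (fun _ : Unit => Ideal.Quotient.mk (Ideal.span {(X : k[X]) ^ p - 1}) X)) := by
  intro s
  obtain ⟨q, rfl⟩ := Ideal.Quotient.mk_surjective s
  exact ⟨(MvPolynomial.pUnitAlgEquiv k).symm q, aeval_symm p k q⟩

noncomputable def P : Algebra.Generators k (Rq p k) Unit :=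
  Algebra.Generators.ofSurjective (ι := Unit)
    (fun _ => Ideal.Quotient.mk _ X) (surj p k)

noncomputable abbrev g : MvPolynomial Unit k := MvPolynomial.X () ^ p - 1

lemma equiv_g : (MvPolynomial.pUnitAlgEquiv k) (g p k) = X ^ p - 1 := by
  simp

lemma dvd_iff (x : MvPolynomial Unit k) :
    (X : k[X]) ^ p - 1 ∣ MvPolynomial.pUnitAlgEquiv k x ↔ g p k ∣ x := by
  constructor
  · intro h
    have h2 : (MvPolynomial.pUnitAlgEquiv k).symm ((X : k[X]) ^ p - 1) ∣
        (MvPolynomial.pUnitAlgEquiv k).symm (MvPolynomial.pUnitAlgEquiv k x) := map_dvd _ h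
    rw [AlgEquiv.symm_apply_apply, ← equiv_g, AlgEquiv.symm_apply_apply] at h2
    exact h2
  · intro h
    have h2 : (MvPolynomial.pUnitAlgEquiv k) (g p k) ∣ (MvPolynomial.pUnitAlgEquiv k) x := by
      obtain ⟨c, rfl⟩ := h
      exact ⟨MvPolynomial.pUnitAlgEquiv k c, map_mul _ _ _⟩
    rwa [equiv_g] at h2

lemma ker_P : (P p k).toExtension.ker = Ideal.span {g p k} := by
  ext x
  have h1 : algebraMap (P p k).toExtension.Ring (Rq p k) x
      = Ideal.Quotient.mk _ (MvPolynomial.pUnitAlgEquiv k x) := by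
    conv_lhs => rw [← AlgEquiv.symm_apply_apply (MvPolynomial.pUnitAlgEquiv k) x]
    exact aeval_symm p k _
  erw [Algebra.Extension.ker, RingHom.mem_ker, h1, Ideal.Quotient.eq_zero_iff_mem,
    Ideal.mem_span_singleton, Ideal.mem_span_singleton]
  exact dvd_iff p k x

lemma g_mem : g p k ∈ (P p k).toExtension.ker := by
  rw [ker_P]; exact Ideal.subset_span rfl

lemma algebraMap_g : algebraMap (P p k).toExtension.Ring (Rq p k) (g p k) = 0 :=
  RingHom.mem_ker.mp (g_mem p k)

lemma g_ne_zero (hp : p ≠ 0) : g p k ≠ 0 := by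
  intro h
  have h2 := congrArg (MvPolynomial.pUnitAlgEquiv k) h
  rw [equiv_g, map_zero] at h2
  have h3 := Polynomial.X_pow_sub_C_ne_zero (Nat.pos_of_ne_zero hp) (1 : k)
  rw [map_one] at h3
  exact h3 h2

variable [CharP k p]

lemma D_g_eq_zero :
    (KaehlerDifferential.D k (P p k).toExtension.Ring) (g p k) = 0 := by
  have hp0 : ((p : ℕ) : (P p k).toExtension.Ring) = 0 := by
    rw [← map_natCast (algebraMap k ((P p k).toExtension.Ring)), CharP.cast_eq_zero, map_zero]
  erw [g, map_sub, Derivation.map_one_eq_zero, sub_zero, Derivation.leibniz_pow,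
    ← Nat.cast_smul_eq_nsmul ((P p k).toExtension.Ring), hp0, zero_smul]

lemma coe_gk : ((⟨g p k, g_mem p k⟩ : (P p k).toExtension.ker) : (P p k).toExtension.Ring)
    = g p k := rfl

lemma tmul_smul_zero {A B : Type*} [CommRing A] [CommRing B] [Algebra A B] {N : Type*}
    [AddCommGroup N] [Module A N] (a : A) (ha : algebraMap A B a = 0) (n : N) :
    (1 : B) ⊗ₜ[A] (a • n) = 0 := by
  rw [← TensorProduct.smul_tmul, ← Algebra.algebraMap_eq_smul_one, ha, TensorProduct.zero_tmul]

lemma cotangentComplex_eq_zero : (P p k).toExtension.cotangentComplex = 0 := by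
  apply LinearMap.ext
  intro x
  obtain ⟨y, rfl⟩ := Algebra.Extension.Cotangent.mk_surjective x
  rw [Algebra.Extension.cotangentComplex_mk, LinearMap.zero_apply]
  set z := (y : (P p k).toExtension.Ring) with hz
  have h2 : z ∈ Ideal.span {g p k} := by rw [hz, ← ker_P]; exact y.2
  erw [Ideal.mem_span_singleton] at h2
  obtain ⟨a, ha⟩ := h2
  erw [ha, Derivation.leibniz, D_g_eq_zero, smul_zero, add_zero]
  exact tmul_smul_zero _ (algebraMap_g p k) _

noncomputable def e2 : (P p k).toExtension.H1Cotangent ≃ₗ[Rq p k] (P p k).toExtension.Cotangent :=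
  LinearEquiv.ofBijective (Algebra.Extension.h1Cotangentι)
    ⟨Algebra.Extension.h1Cotangentι_injective,
     fun x => ⟨⟨x, by rw [LinearMap.mem_ker, cotangentComplex_eq_zero, LinearMap.zero_apply]⟩, rfl⟩⟩

noncomputable abbrev v : (P p k).toExtension.Cotangent :=
  Algebra.Extension.Cotangent.mk ⟨g p k, g_mem p k⟩

lemma toSpan_bijective (hp : p ≠ 0) :
    Function.Bijective (LinearMap.toSpanSingleton (Rq p k) _ (v p k)) := by
  haveI : NoZeroDivisors (P p k).toExtension.Ring :=
    inferInstanceAs (NoZeroDivisors (MvPolynomial Unit k))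
  constructor
  · intro r s hrs
    simp only [LinearMap.toSpanSingleton_apply] at hrs
    have h : (r - s) • v p k = 0 := by rw [sub_smul, hrs, sub_self]
    obtain ⟨a, ha⟩ := (P p k).toExtension.algebraMap_surjective (r - s)
    rw [← ha, algebraMap_smul] at h
    have h2 : Ideal.toCotangent _ (a • (⟨g p k, g_mem p k⟩ : (P p k).toExtension.ker)) = 0 := by
      have h3 := congrArg Algebra.Extension.Cotangent.val h
      rw [Algebra.Extension.Cotangent.val_smul'] at h3
      simpa using h3
    rw [Ideal.toCotangent_eq_zero] at h2
    have hsq : ((P p k).toExtension.ker) ^ 2 = Ideal.span {g p k * g p k} := by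
      erw [ker_P, Ideal.span_singleton_pow, pow_two]
    have h3 : ((a • (⟨g p k, g_mem p k⟩ : (P p k).toExtension.ker) : (P p k).toExtension.ker)
        : (P p k).toExtension.Ring)
        = a * ((⟨g p k, g_mem p k⟩ : (P p k).toExtension.ker) : (P p k).toExtension.Ring) := rfl
    have hcoe : ((⟨g p k, g_mem p k⟩ : (P p k).toExtension.ker) : (P p k).toExtension.Ring)
        = g p k := rfl
    erw [hsq, h3, hcoe, Ideal.mem_span_singleton] at h2
    obtain ⟨b, hb⟩ := h2
    have hg : g p k ≠ 0 := g_ne_zero p k hp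
    have hker : a ∈ (P p k).toExtension.ker := by
      erw [ker_P, Ideal.mem_span_singleton]
      refine ⟨b, ?_⟩
      apply mul_left_cancel₀ hg
      erw [← mul_assoc, ← hb, mul_comm]
      rfl
    rw [RingHom.mem_ker, ha] at hker
    exact sub_eq_zero.mp hker
  · intro x
    obtain ⟨⟨y, hy⟩, rfl⟩ := Algebra.Extension.Cotangent.mk_surjective x
    have hy' := hy
    erw [ker_P, Ideal.mem_span_singleton] at hy'
    obtain ⟨a, hya⟩ := hy'
    refine ⟨algebraMap _ _ a, ?_⟩
    rw [LinearMap.toSpanSingleton_apply, algebraMap_smul]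
    have hcoe : ((⟨g p k, g_mem p k⟩ : (P p k).toExtension.ker) : (P p k).toExtension.Ring)
        = g p k := rfl
    have h4 : (a • (⟨g p k, g_mem p k⟩ : (P p k).toExtension.ker)) = ⟨y, hy⟩ := by
      ext
      show a * ((⟨g p k, g_mem p k⟩ : (P p k).toExtension.ker) : (P p k).toExtension.Ring) = y
      rw [hcoe, hya]
      exact mul_comm _ _
    rw [← h4, map_smul]

noncomputable def e3 (hp : p ≠ 0) : (Rq p k) ≃ₗ[Rq p k] (P p k).toExtension.Cotangent :=
  LinearEquiv.ofBijective _ (toSpan_bijective p k hp)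

end H1MuP

/-- For a prime `p` and a field `k` of characteristic `p`, with `R = k[X]/(X^p − 1)`,
the first André–Quillen homology `H¹Cotangent` of `R` over `k` (the first homology of
the cotangent complex of `R` over `k`) is a free `R`-module of rank `1`. -/
theorem h1Cotangent_mu_p_free_rank_one (p : ℕ) (hp : p.Prime)
    (k : Type*) [Field k] [CharP k p] :
    Nonempty (Module.Basis Unit (k[X] ⧸ Ideal.span {(X : k[X]) ^ p - 1})
      (Algebra.H1Cotangent k (k[X] ⧸ Ideal.span {(X : k[X]) ^ p - 1}))) := by
  refine ⟨(Module.Basis.singleton Unit (H1MuP.Rq p k)).map ?_⟩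
  exact (H1MuP.e3 p k hp.ne_zero) ≪≫ₗ (H1MuP.e2 p k).symm ≪≫ₗ (H1MuP.P p k).equivH1Cotangent
end

section
/- Let k be a field, let m ≥ 2 be a natural number, let R = k[X]/(X^m), and regard k as an R-module via the k-algebra homomorphism R → k sending X̄ to 0. Then for every natural number n, the Ext group Ext^n_R(k, k) is a one-dimensional k-vector space (equivalently, there is an additive isomorphism Ext^n_R(k, k) ≅ k). (For m = p = char k, this computes the coherent cohomology H^n(Bα_p, O), which is one-dimensional in every degree n ≥ 0.) -/
open Polynomial CategoryTheory

noncomputable section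
namespace ExtQuotAux

section Generic

variable (R : Type) [CommRing R] (c : ℕ → R) (hc : ∀ n, c n * c (n + 1) = 0)

include hc in
/-- The periodic complex `... → R → R → R` with differentials multiplication by `c n`. -/
def cx : ChainComplex (ModuleCat R) ℕ :=
  ChainComplex.of (fun _ => ModuleCat.of R R)
    (fun n => ModuleCat.ofHom (LinearMap.lsmul R R (c n)))
    (fun n => by
      refine ModuleCat.hom_ext (LinearMap.ext fun r => ?_)
      show c n • (c (n + 1) • r) = (0 : R)
      rw [smul_smul, smul_eq_mul, hc n, zero_mul])

@[simp] lemma cx_X (n : ℕ) : (cx R c hc).X n = ModuleCat.of R R := rfl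

lemma cx_d (n : ℕ) : (cx R c hc).d (n + 1) n = ModuleCat.ofHom (LinearMap.lsmul R R (c n)) :=
  ChainComplex.of_d (fun _ => ModuleCat.of R R) (fun n => ModuleCat.ofHom (LinearMap.lsmul R R (c n))) n

variable (K : Type) [AddCommGroup K] [Module R K]
variable (φ : R →ₗ[R] K)

instance (n : ℕ) : Projective ((cx R c hc).X n) :=
  (IsProjective.iff_projective (R := R) R).mp inferInstance

lemma d_comp_φ (hφc : φ (c 0) = 0) :
    (cx R c hc).d 1 0 ≫ (ModuleCat.ofHom φ) = 0 := by
  refine ModuleCat.hom_ext (LinearMap.ext fun (r : R) => ?_)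
  show φ (c 0 • r) = 0
  rw [smul_eq_mul, mul_comm, ← smul_eq_mul, map_smul, hφc, smul_zero]

/-- `cx` is a projective resolution of `K`. -/
def resolution (hsurj : Function.Surjective φ) (hφc : φ (c 0) = 0)
    (hker : ∀ r : R, φ r = 0 → ∃ s, c 0 * s = r)
    (hex : ∀ n (r : R), c n * r = 0 → ∃ s, c (n + 1) * s = r) : ProjectiveResolution (ModuleCat.of R K) where
  complex := cx R c hc
  π := (ChainComplex.toSingle₀Equiv _ _).symm
    ⟨(ModuleCat.ofHom φ), d_comp_φ R c hc K φ hφc⟩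
  quasiIso := ⟨fun n => by
    cases n with
    | zero =>
      rw [ChainComplex.quasiIsoAt₀_iff, ShortComplex.quasiIso_iff_of_zeros']
      rotate_left
      · rfl
      · rfl
      · rfl
      constructor
      · rw [ShortComplex.moduleCat_exact_iff]
        intro x hx
        have hx' : φ x = 0 := by
          exact hx
        obtain ⟨s, hs⟩ := hker x hx'
        exact ⟨s, hs⟩
      · rw [ModuleCat.epi_iff_surjective]
        intro y
        obtain ⟨r, hr⟩ := hsurj y
        exact ⟨r, hr⟩
    | succ n =>
      rw [quasiIsoAt_iff_exactAt']
      · rw [HomologicalComplex.exactAt_iff' _ (n + 2) (n + 1) n (by simp)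
          (by simp), ShortComplex.moduleCat_exact_iff]
        intro x hx
        have hx2 : (cx R c hc).d (n + 1) n x = 0 := hx
        rw [cx_d R c hc n] at hx2
        obtain ⟨s, hs⟩ := hex n x (by exact hx2)
        refine ⟨s, ?_⟩
        show (cx R c hc).d (n + 2) (n + 1) s = x
        rw [cx_d R c hc (n + 1)]
        exact hs
      · apply ChainComplex.exactAt_succ_single_obj⟩


lemma yoneda_d_zero (hK : ∀ n (a : K), c n • a = 0) (i j : ℕ) :
    ((cx R c hc).linearYonedaObj R (ModuleCat.of R K)).d i j = 0 := by
  by_cases hij : j = i + 1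
  · subst hij
    refine ModuleCat.hom_ext (LinearMap.ext fun (ψ : (cx R c hc).X i ⟶ ModuleCat.of R K) => ?_)
    show (((cx R c hc).linearYonedaObj R (ModuleCat.of R K)).d i (i + 1)).hom ψ = 0
    have : (((cx R c hc).linearYonedaObj R (ModuleCat.of R K)).d i (i + 1)).hom ψ
        = (cx R c hc).d (i + 1) i ≫ ψ := by
      rfl
    rw [this, cx_d R c hc i]
    refine ModuleCat.hom_ext (LinearMap.ext fun (r : R) => ?_)
    show ψ.hom (c i • r) = 0
    exact (ψ.hom.map_smul (c i) r).trans (hK i _)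
  · exact HomologicalComplex.shape _ _ _
      (by simp only [ComplexShape.up_Rel]; exact fun h => hij h.symm)

/-- Homology of the Yoneda complex is just its objects. -/
def homologyIsoSelf (hK : ∀ n (a : K), c n • a = 0) (n : ℕ) :
    ((cx R c hc).linearYonedaObj R (ModuleCat.of R K)).homology n ≅
      ModuleCat.of R ((cx R c hc).X n ⟶ ModuleCat.of R K) :=
  (ShortComplex.HomologyData.ofZeros
    (((cx R c hc).linearYonedaObj R (ModuleCat.of R K)).sc n)
    (yoneda_d_zero R c hc K hK _ _) (yoneda_d_zero R c hc K hK _ _)).left.homologyIso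

/-- The hom-module is `K`. -/
def homAddEquiv (n : ℕ) : ((cx R c hc).X n ⟶ ModuleCat.of R K) ≃+ K :=
  ModuleCat.homAddEquiv.trans (LinearMap.ringLmapEquivSelf R ℕ K).toAddEquiv

include hc in
lemma ext_addEquiv (hsurj : Function.Surjective φ) (hφc : φ (c 0) = 0)
    (hker : ∀ r : R, φ r = 0 → ∃ s, c 0 * s = r)
    (hex : ∀ n (r : R), c n * r = 0 → ∃ s, c (n + 1) * s = r)
    (hK : ∀ n (a : K), c n • a = 0) (n : ℕ) :
    Nonempty ((((Ext R (ModuleCat R) n).obj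
      (Opposite.op (ModuleCat.of R K))).obj (ModuleCat.of R K)) ≃+ K) := by
  let P := resolution R c hc K φ hsurj hφc hker hex
  let e : (((Ext R (ModuleCat R) n).obj
        (Opposite.op (ModuleCat.of R K))).obj (ModuleCat.of R K)) ≅
      ((cx R c hc).linearYonedaObj R (ModuleCat.of R K)).homology n :=
    P.isoExt n (ModuleCat.of R K)
  let e2 : ((cx R c hc).linearYonedaObj R (ModuleCat.of R K)).homology n ≅
      ModuleCat.of R ((cx R c hc).X n ⟶ ModuleCat.of R K) :=
    homologyIsoSelf R c hc K hK n
  exact ⟨((e ≪≫ e2).toLinearEquiv.toAddEquiv).trans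
    (homAddEquiv R c hc K n)⟩

end Generic

section Quotient

variable {k : Type} [Field k] {m : ℕ}

/-- the coefficient polynomials of the periodic resolution -/
def g (m n : ℕ) : k[X] := if Even n then (X : k[X]) else (X : k[X]) ^ (m - 1)

lemma g_mul_g (hm : 2 ≤ m) (n : ℕ) : g m n * g m (n + 1) = (X : k[X]) ^ m := by
  rcases Nat.even_or_odd n with h | h
  · rw [g, g, if_pos h, if_neg (by simp [Nat.even_add_one, Nat.not_even_iff_odd,
      Nat.not_even_iff_odd, h]), ← pow_succ']
    congr 1; omega
  · rw [g, g, if_neg (Nat.not_even_iff_odd.mpr h),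
      if_pos (by simpa [Nat.even_add_one] using Nat.not_even_iff_odd.mpr h), ← pow_succ]
    congr 1; omega

lemma one_le_deg_g (hm : 2 ≤ m) (n : ℕ) : ∃ j, 1 ≤ j ∧ g m n = (X : k[X]) ^ j := by
  rcases Nat.even_or_odd n with h | h
  · exact ⟨1, le_refl _, by simp [g, if_pos h]⟩
  · exact ⟨m - 1, by omega, by simp [g, if_neg (Nat.not_even_iff_odd.mpr h)]⟩

/-- key divisibility lemma -/
lemma exists_of_mul_eq_zero {a b : ℕ} (ha : 1 ≤ a) (hab : a + b = m)
    (r : k[X] ⧸ Ideal.span {(X : k[X]) ^ m}) (h : Ideal.Quotient.mk _ ((X : k[X]) ^ a) * r = 0) :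
    ∃ s : k[X] ⧸ Ideal.span {(X : k[X]) ^ m}, Ideal.Quotient.mk _ ((X : k[X]) ^ b) * s = r := by
  obtain ⟨p, rfl⟩ := Ideal.Quotient.mk_surjective r
  have h' : (X : k[X]) ^ a * p ∈ Ideal.span {(X : k[X]) ^ m} := by
    rwa [← map_mul, Ideal.Quotient.eq_zero_iff_mem] at h
  rw [Ideal.mem_span_singleton] at h'
  obtain ⟨q, hq⟩ := h'
  refine ⟨Ideal.Quotient.mk _ q, ?_⟩
  rw [← map_mul]
  congr 1
  have hX : (X : k[X]) ^ a ≠ 0 := pow_ne_zero _ X_ne_zero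
  apply mul_left_cancel₀ hX
  rw [hq, ← hab, pow_add]; ring




lemma f_mk (f : (k[X] ⧸ Ideal.span {(X : k[X]) ^ m}) →ₐ[k] k)
    (hf : f (Ideal.Quotient.mk (Ideal.span {(X : k[X]) ^ m}) X) = 0) (p : k[X]) :
    f (Ideal.Quotient.mk _ p) = p.eval 0 := by
  have h : f.comp (Ideal.Quotient.mkₐ k (Ideal.span {(X : k[X]) ^ m}))
      = aeval (0 : k) := by
    apply Polynomial.algHom_ext
    simpa [Ideal.Quotient.mkₐ_eq_mk] using hf
  have h2 := DFunLike.congr_fun h p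
  simpa [Ideal.Quotient.mkₐ_eq_mk] using h2

end Quotient
end ExtQuotAux
end

open ExtQuotAux

/-- Let `k` be a field, `m ≥ 2`, `R = k[X]/(X^m)`, and regard `k` as an `R`-module via
the `k`-algebra homomorphism `R → k` sending `X̄` to `0` (i.e. `r • a = f r * a`). Then
for every `n : ℕ`, the Ext group `Ext^n_R(k, k)` is one-dimensional over `k`, i.e. there
is an additive isomorphism `Ext^n_R(k, k) ≃+ k`. -/
theorem ext_self_quotient_one_dimensional (k : Type) [Field k] (m : ℕ) (hm : 2 ≤ m)
    (f : (k[X] ⧸ Ideal.span {(X : k[X]) ^ m}) →ₐ[k] k)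
    (hf : f (Ideal.Quotient.mk (Ideal.span {(X : k[X]) ^ m}) X) = 0)
    [Module (k[X] ⧸ Ideal.span {(X : k[X]) ^ m}) k]
    (hsmul : ∀ (r : k[X] ⧸ Ideal.span {(X : k[X]) ^ m}) (a : k), r • a = f r * a)
    (n : ℕ) :
    Nonempty
      (((Ext (k[X] ⧸ Ideal.span {(X : k[X]) ^ m})
            (ModuleCat (k[X] ⧸ Ideal.span {(X : k[X]) ^ m})) n).obj
          (Opposite.op (ModuleCat.of (k[X] ⧸ Ideal.span {(X : k[X]) ^ m}) k))).obj
        (ModuleCat.of (k[X] ⧸ Ideal.span {(X : k[X]) ^ m}) k) ≃+ k) := by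
  have hXm : Ideal.Quotient.mk (Ideal.span {(X : k[X]) ^ m}) (X ^ m) = 0 :=
    Ideal.Quotient.eq_zero_iff_mem.mpr (Ideal.mem_span_singleton_self _)
  -- the multiplication sequence
  set c : ℕ → (k[X] ⧸ Ideal.span {(X : k[X]) ^ m}) :=
    fun n => Ideal.Quotient.mk _ (g m n) with hc_def
  have hc : ∀ n, c n * c (n + 1) = 0 := fun n => by
    rw [hc_def, ← map_mul, g_mul_g hm n, hXm]
  -- the augmentation as a linear map
  let φ : (k[X] ⧸ Ideal.span {(X : k[X]) ^ m}) →ₗ[k[X] ⧸ Ideal.span {(X : k[X]) ^ m}] k :=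
    { toFun := f
      map_add' := map_add f
      map_smul' := fun r s => by
        show f (r * s) = r • f s
        rw [map_mul, hsmul] }
  have hg0 : g m 0 = (X : k[X]) := by simp [g]
  have fc : ∀ j : ℕ, 1 ≤ j →
      f (Ideal.Quotient.mk (Ideal.span {(X : k[X]) ^ m}) ((X : k[X]) ^ j)) = 0 := by
    intro j hj
    rw [f_mk f hf]
    simp [zero_pow (by omega : j ≠ 0)]
  refine ext_addEquiv _ c hc k φ ?_ ?_ ?_ ?_ ?_ n
  · -- surjectivity
    intro a
    exact ⟨algebraMap k _ a, by show f _ = a; simpa using f.commutes a⟩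
  · -- φ (c 0) = 0
    show f (Ideal.Quotient.mk _ (g m 0)) = 0
    rw [hg0]; exact hf
  · -- kernel of φ
    intro r hr
    obtain ⟨p, rfl⟩ := Ideal.Quotient.mk_surjective r
    have hp : p.eval 0 = 0 := by rw [← f_mk f hf]; exact hr
    have hdvd : (X : k[X]) ∣ p := by
      rw [X_dvd_iff, coeff_zero_eq_eval_zero]; exact hp
    obtain ⟨q, rfl⟩ := hdvd
    exact ⟨Ideal.Quotient.mk _ q, by simp only [hc_def]; rw [hg0, ← map_mul]⟩
  · -- exactness
    intro n r h
    rcases Nat.even_or_odd n with he | ho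
    · have h1 : g m n = (X : k[X]) ^ 1 := by simp [g, if_pos he]
      have h2 : g m (n + 1) = (X : k[X]) ^ (m - 1) := by
        simp [g, Nat.even_add_one, Nat.not_even_iff_odd, he]
      simp only [hc_def] at h ⊢
      rw [h1] at h
      obtain ⟨s, hs⟩ := exists_of_mul_eq_zero (m := m) (a := 1) (b := m - 1) (le_refl 1) (by omega) r h
      exact ⟨s, by rw [h2]; exact hs⟩
    · have h1 : g m n = (X : k[X]) ^ (m - 1) := by
        simp [g, Nat.not_even_iff_odd.mpr ho]
      have h2 : g m (n + 1) = (X : k[X]) ^ 1 := by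
        simp [g, Nat.even_add_one, Nat.not_even_iff_odd, Nat.not_even_iff_odd.mpr ho]
      simp only [hc_def] at h ⊢
      rw [h1] at h
      obtain ⟨s, hs⟩ := exists_of_mul_eq_zero (m := m) (a := m - 1) (b := 1) (by omega) (by omega) r h
      exact ⟨s, by rw [h2]; exact hs⟩
  · -- c n acts trivially on k
    intro n a
    rw [hsmul]
    rcases Nat.even_or_odd n with he | ho
    · have h1 : g m n = (X : k[X]) ^ 1 := by simp [g, if_pos he]
      simp only [hc_def]
      rw [h1, fc 1 le_rfl, zero_mul]
    · have h1 : g m n = (X : k[X]) ^ (m - 1) := by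
        simp [g, Nat.not_even_iff_odd.mpr ho]
      simp only [hc_def]
      rw [h1, fc (m - 1) (by omega), zero_mul]
end
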